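/- Let V be a finite-dimensional complex inner product space and d : V → V a linear map with d ∘ d = 0; let d* be the adjoint of d and Δ = d ∘ d* + d* ∘ d. Let W ⊆ V be a linear subspace with d(W) ⊆ W and d*(W) ⊆ W. Assume the inclusion W ⊆ V is a quasi-isomorphism of complexes, i.e. (i) for every x ∈ ker d there exist w ∈ W ∩ ker d and v ∈ V with x = w + d v, and (ii) every w ∈ W ∩ ker d that lies in range d lies in d(W). Then ker Δ ⊆ W. -/

import Mathlib

open LinearMap

/-- A `d`- and `d*`-invariant subspace `W` of a finite-dimensional complex inner product
space that is quasi-isomorphically included in `(V, d)` contains all harmonic elements,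
i.e. `ker Δ ⊆ W` where `Δ = d ∘ d* + d* ∘ d`. -/
theorem stmt_3 {V : Type*} [NormedAddCommGroup V] [InnerProductSpace ℂ V]
    [FiniteDimensional ℂ V] (d : V →ₗ[ℂ] V) (hd : d ∘ₗ d = 0)
    (W : Submodule ℂ V)
    (hWd : ∀ x ∈ W, d x ∈ W)
    (hWd' : ∀ x ∈ W, adjoint d x ∈ W)
    (hsurj : ∀ x ∈ ker d, ∃ w ∈ W, w ∈ ker d ∧ ∃ v : V, x = w + d v)
    (hinj : ∀ w ∈ W, w ∈ ker d → w ∈ range d → ∃ u ∈ W, d u = w) :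
    ker (d ∘ₗ adjoint d + adjoint d ∘ₗ d) ≤ W := by
  intro x hx
  rw [mem_ker] at hx
  simp only [LinearMap.add_apply, comp_apply] at hx
  -- x is harmonic: d x = 0 and d* x = 0
  have hsum : (inner ℂ (adjoint d x) (adjoint d x) : ℂ) + inner ℂ (d x) (d x) = 0 := by
    have h1 : (inner ℂ (d (adjoint d x)) x : ℂ) = inner ℂ (adjoint d x) (adjoint d x) :=
      (adjoint_inner_right d (adjoint d x) x).symm
    have h2 : (inner ℂ (adjoint d (d x)) x : ℂ) = inner ℂ (d x) (d x) :=
      adjoint_inner_left d x (d x)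
    calc (inner ℂ (adjoint d x) (adjoint d x) : ℂ) + inner ℂ (d x) (d x)
        = inner ℂ (d (adjoint d x) + adjoint d (d x)) x := by
          rw [inner_add_left, h1, h2]
      _ = 0 := by rw [hx, inner_zero_left]
  have hnorm : ‖adjoint d x‖ ^ 2 + ‖d x‖ ^ 2 = 0 := by
    have := hsum
    rw [inner_self_eq_norm_sq_to_K, inner_self_eq_norm_sq_to_K] at this
    exact_mod_cast congrArg Complex.re this
  have hdx : d x = 0 := by
    have : ‖d x‖ ^ 2 = 0 := le_antisymm (by nlinarith [sq_nonneg ‖adjoint d x‖]) (by positivity)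
    simpa [pow_eq_zero_iff] using this
  have hdsx : adjoint d x = 0 := by
    have : ‖adjoint d x‖ ^ 2 = 0 := le_antisymm (by nlinarith [sq_nonneg ‖d x‖]) (by positivity)
    simpa [pow_eq_zero_iff] using this
  obtain ⟨w, hwW, hwker, v, hxwv⟩ := hsurj x (mem_ker.mpr hdx)
  -- split v = a + b, a ∈ W, b ∈ Wᗮ
  set a : V := (W.orthogonalProjectionOnto v : V) with ha
  set b : V := v - a with hb
  have haW : a ∈ W := (W.orthogonalProjectionOnto v).2
  have hbperp : b ∈ Wᗮ := W.sub_starProjection_mem_orthogonal v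
  have hvab : v = a + b := by simp [hb]
  -- d b ∈ Wᗮ
  have hdbperp : d b ∈ Wᗮ := by
    intro y hy
    rw [← adjoint_inner_left d b y]
    exact hbperp (adjoint d y) (hWd' y hy)
  -- d b = 0
  have hdb : d b = 0 := by
    have key : (inner ℂ (d b) (d b) : ℂ) = 0 := by
      have hxw : d b = x - w - d a := by
        rw [hxwv, hvab, map_add]; abel
      have h1 : (inner ℂ (d b) x : ℂ) = 0 := by
        rw [← adjoint_inner_right d b x, hdsx, inner_zero_right]
      have h2 : (inner ℂ (d b) w : ℂ) = 0 :=
        (Submodule.mem_orthogonal' W (d b)).mp hdbperp w hwW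
      have h3 : (inner ℂ (d b) (d a) : ℂ) = 0 :=
        (Submodule.mem_orthogonal' W (d b)).mp hdbperp (d a) (hWd a haW)
      calc (inner ℂ (d b) (d b) : ℂ) = inner ℂ (d b) (x - w - d a) := by rw [← hxw]
        _ = 0 := by rw [inner_sub_right, inner_sub_right, h1, h2, h3]; ring
    exact inner_self_eq_zero.mp key
  have : x = w + d a := by
    rw [hxwv, hvab, map_add, hdb, add_zero]
  rw [this]
  exact W.add_mem hwW (hWd a haW)
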